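/- Let E be a vector bundle of rank r on a smooth curve C, and F ⊂ E a rank-n subbundle. If s₁(⋀ⁿE) ≥ 0 then deg F ≤ n·μ(E), i.e. μ(F) ≤ μ(E). Consequently, if s₁(⋀ⁿE) ≥ 0 for all 1 ≤ n ≤ r−1, then E is semistable. -/

import Mathlib

/- STATEMENT 13: If `F ⊆ E` is a rank-`n` subbundle and `s₁(⋀ⁿE) ≥ 0`, then
`deg F ≤ n·μ(E)`, i.e. `μ(F) ≤ μ(E)`; consequently if `s₁(⋀ⁿE) ≥ 0` for all
`1 ≤ n ≤ r−1` then `E` is semistable.  Bundles are encoded numerically;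
`Lam n` plays the role of `⋀ⁿE` (rank `C(r,n)`, degree `C(r−1,n−1)·deg E`),
and `hwedge` records that a rank-`n` subbundle `F ⊆ E` of degree `f` yields
the line subbundle `⋀ⁿF ⊆ ⋀ⁿE` of degree `f`.  `s₁(⋀ⁿE) ≥ 0` is the statement
that every line subbundle degree `t` satisfies `deg − rk·t ≥ 0`. -/
structure BundleData where
  rk : ℕ
  deg : ℤ
  sub : Set (ℕ × ℤ)
  rk_pos : 0 < rk
  sub_proper : ∀ p ∈ sub, 0 < p.1 ∧ p.1 < rk

def BundleData.slope (B : BundleData) : ℚ := (B.deg : ℚ) / (B.rk : ℚ)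

def BundleData.Semistable (B : BundleData) : Prop :=
  ∀ p ∈ B.sub, (p.2 : ℚ) / (p.1 : ℚ) ≤ B.slope

theorem semistable_from_exterior_segre
    (E : BundleData) (r : ℕ) (hrE : E.rk = r) (hr : 2 ≤ r)
    (Lam : ℕ → BundleData)
    (hrk : ∀ n, 1 ≤ n → n ≤ r - 1 → (Lam n).rk = r.choose n)
    (hdeg : ∀ n, 1 ≤ n → n ≤ r - 1 →
      (Lam n).deg = ((r - 1).choose (n - 1) : ℤ) * E.deg)
    (hwedge : ∀ n (f : ℤ), 1 ≤ n → n ≤ r - 1 →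
      (n, f) ∈ E.sub → (1, f) ∈ (Lam n).sub)
    (hs1 : ∀ n, 1 ≤ n → n ≤ r - 1 →
      ∀ p ∈ (Lam n).sub, p.1 = 1 →
        0 ≤ (Lam n).deg - ((Lam n).rk : ℤ) * p.2) :
    (∀ n (f : ℤ), 1 ≤ n → n ≤ r - 1 → (n, f) ∈ E.sub →
      (f : ℚ) ≤ (n : ℚ) * E.slope) ∧
    E.Semistable := by
  have key : ∀ n (f : ℤ), 1 ≤ n → n ≤ r - 1 → (n, f) ∈ E.sub →
      (f : ℚ) ≤ (n : ℚ) * E.slope := by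
    intro n f hn1 hnr hmem
    have h1 : (1, f) ∈ (Lam n).sub := hwedge n f hn1 hnr hmem
    have h2 := hs1 n hn1 hnr (1, f) h1 rfl
    rw [hdeg n hn1 hnr, hrk n hn1 hnr] at h2
    -- h2 : 0 ≤ C(r-1, n-1) * E.deg - C(r,n) * f
    have hid : r * (r - 1).choose (n - 1) = r.choose n * n := by
      have h := Nat.add_one_mul_choose_eq (r - 1) (n - 1)
      have hr1 : r - 1 + 1 = r := Nat.succ_pred_eq_of_pos (show 0 < r by omega)
      have hn1' : n - 1 + 1 = n := Nat.succ_pred_eq_of_pos (show 0 < n by omega)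
      rwa [hr1, hn1'] at h
    have hcpos : 0 < (r - 1).choose (n - 1) := Nat.choose_pos (by omega)
    -- multiply h2 by n
    have h3 : (r.choose n : ℤ) * f ≤ ((r - 1).choose (n - 1) : ℤ) * E.deg := by
      linarith
    have h4 : (n : ℤ) * ((r.choose n : ℤ) * f) ≤
        (n : ℤ) * (((r - 1).choose (n - 1) : ℤ) * E.deg) := by
      apply mul_le_mul_of_nonneg_left h3 (by positivity)
    have h5 : (r : ℤ) * (((r - 1).choose (n - 1) : ℤ) * f) ≤
        (n : ℤ) * (((r - 1).choose (n - 1) : ℤ) * E.deg) := by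
      have : (r : ℤ) * ((r - 1).choose (n - 1) : ℤ) = (r.choose n : ℤ) * n := by
        exact_mod_cast congrArg (Nat.cast : ℕ → ℤ) hid
      calc (r : ℤ) * (((r - 1).choose (n - 1) : ℤ) * f)
          = ((r : ℤ) * ((r - 1).choose (n - 1) : ℤ)) * f := by ring
        _ = ((r.choose n : ℤ) * n) * f := by rw [this]
        _ = (n : ℤ) * ((r.choose n : ℤ) * f) := by ring
        _ ≤ _ := h4
    have h6 : (r : ℤ) * f ≤ (n : ℤ) * E.deg := by
      have hc : (0 : ℤ) < ((r - 1).choose (n - 1) : ℤ) := by exact_mod_cast hcpos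
      nlinarith
    have hrpos : (0 : ℚ) < (r : ℚ) := by
      have : 0 < r := by omega
      exact_mod_cast this
    rw [BundleData.slope, hrE, ← mul_div_assoc, le_div_iff₀ hrpos]
    have : (f : ℚ) * r ≤ (n : ℚ) * E.deg := by exact_mod_cast by linarith [h6]
    exact this
  refine ⟨key, ?_⟩
  intro p hp
  obtain ⟨n, f⟩ := p
  have hprop := E.sub_proper (n, f) hp
  simp only at hprop
  have hn1 : 1 ≤ n := hprop.1
  have hnr : n ≤ r - 1 := by omega
  have := key n f hn1 hnr hp
  have hnpos : (0 : ℚ) < (n : ℚ) := by exact_mod_cast hn1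
  rw [div_le_iff₀ hnpos]
  linarith [this]
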